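/- Let N ≥ 2 be an integer and s ∈ (0,1). There exists a constant c > 0, depending only on N and s, such that for every open set Ω ⊆ ℝ^N with nonempty complement and all x₁, x₂ ∈ Ω, |φ_Ω(x₁) − φ_Ω(x₂)| ≤ c·(ρ(x₁)^{−1−2s} + ρ(x₂)^{−1−2s})·|x₁ − x₂|, where ρ(x) = dist(x, ∂Ω). In particular, φ_Ω is locally Lipschitz continuous on Ω. -/

import Mathlib

open MeasureTheory Metric Set Filter

/-- `φ_Ω(x) = ∫_{ℝ^N \ Ω} |x - y|^{-N-2s} dy`. -/
noncomputable def phiReg (N : ℕ) (s : ℝ) (Ω : Set (EuclideanSpace ℝ (Fin N)))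
    (x : EuclideanSpace ℝ (Fin N)) : ℝ :=
  ∫ y in Ωᶜ, ‖x - y‖ ^ (-((N : ℝ) + 2 * s))


lemma aux_integrableOn {N : ℕ} (hN : 2 ≤ N) {β : ℝ} (hβ : (N : ℝ) < β)
    (x : EuclideanSpace ℝ (Fin N)) {ρ : ℝ} (hρ : 0 < ρ) :
    IntegrableOn (fun y => ‖x - y‖ ^ (-β)) (Metric.ball x ρ)ᶜ volume := by
  have hβ0 : 0 < β := lt_of_le_of_lt (by positivity) hβ
  have hdim : (Module.finrank ℝ (EuclideanSpace ℝ (Fin N)) : ℝ) < β := by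
    rw [finrank_euclideanSpace_fin]; exact hβ
  have h1 : Integrable (fun y : EuclideanSpace ℝ (Fin N) => (1 + ‖y‖) ^ (-β)) volume :=
    integrable_one_add_norm hdim
  have h2 : Integrable (fun y : EuclideanSpace ℝ (Fin N) => (1 + ‖x - y‖) ^ (-β)) volume :=
    h1.comp_sub_left x
  have h3 : Integrable
      (fun y : EuclideanSpace ℝ (Fin N) => (1 + ρ⁻¹) ^ β * (1 + ‖x - y‖) ^ (-β)) volume :=
    h2.const_mul _
  refine Integrable.mono' h3.integrableOn ?_ ?_
  · apply Measurable.aestronglyMeasurable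
    fun_prop
  · rw [ae_restrict_iff' measurableSet_ball.compl]
    refine ae_of_all _ fun y hy => ?_
    have hyx : ρ ≤ ‖x - y‖ := by
      have : ¬ dist y x < ρ := hy
      rw [dist_eq_norm, norm_sub_rev] at this
      linarith [not_lt.mp this]
    have ht0 : (0:ℝ) < ‖x - y‖ := lt_of_lt_of_le hρ hyx
    rw [Real.norm_eq_abs, abs_of_nonneg (Real.rpow_nonneg (norm_nonneg _) _)]
    set t := ‖x - y‖ with htdef
    have h4 : t⁻¹ ≤ ρ⁻¹ := by gcongr
    have key : t⁻¹ ≤ (1 + ρ⁻¹) * (1 + t)⁻¹ := by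
      have h5 : (1 + t) * t⁻¹ ≤ 1 + ρ⁻¹ := by
        rw [add_mul, mul_inv_cancel₀ ht0.ne', one_mul, add_comm]
        linarith
      calc t⁻¹ = (1 + t)⁻¹ * ((1 + t) * t⁻¹) := by field_simp
        _ ≤ (1 + t)⁻¹ * (1 + ρ⁻¹) := by
            exact mul_le_mul_of_nonneg_left h5 (by positivity)
        _ = (1 + ρ⁻¹) * (1 + t)⁻¹ := mul_comm _ _
    calc t ^ (-β) = (t⁻¹) ^ β := by
          rw [Real.inv_rpow ht0.le, ← Real.rpow_neg ht0.le]
      _ ≤ ((1 + ρ⁻¹) * (1 + t)⁻¹) ^ β := by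
          apply Real.rpow_le_rpow (by positivity) key hβ0.le
      _ = (1 + ρ⁻¹) ^ β * (1 + t) ^ (-β) := by
          rw [Real.mul_rpow (by positivity) (by positivity),
            Real.inv_rpow (by positivity : (0:ℝ) ≤ 1 + t), ← Real.rpow_neg (by positivity)]


lemma aux_integral {N : ℕ} (hN : 2 ≤ N) {β : ℝ} (hβ : (N : ℝ) < β)
    (x : EuclideanSpace ℝ (Fin N)) {ρ : ℝ} (hρ : 0 < ρ) :
    ∫ y in (Metric.ball x ρ)ᶜ, ‖x - y‖ ^ (-β) =
      (N : ℝ) * (volume (Metric.ball (0 : EuclideanSpace ℝ (Fin N)) 1)).toReal *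
        (ρ ^ ((N : ℝ) - β) / (β - (N : ℝ))) := by
  haveI : Nonempty (Fin N) := ⟨⟨0, by omega⟩⟩
  haveI : Nontrivial (EuclideanSpace ℝ (Fin N)) := inferInstance
  set g : ℝ → ℝ := (Set.Ici ρ).indicator (fun t => t ^ (-β)) with hg
  have h1 : ∫ y in (Metric.ball x ρ)ᶜ, ‖x - y‖ ^ (-β) = ∫ y, g ‖x - y‖ := by
    rw [← integral_indicator measurableSet_ball.compl]
    congr 1
    funext y
    by_cases h : ρ ≤ ‖x - y‖
    · have hy : y ∈ (Metric.ball x ρ)ᶜ := by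
        simp only [mem_compl_iff, mem_ball, not_lt, dist_eq_norm]
        rwa [norm_sub_rev y x]
      rw [Set.indicator_of_mem hy]
      exact (Set.indicator_of_mem (Set.mem_Ici.mpr h) (fun t : ℝ => t ^ (-β))).symm
    · have hy : y ∉ (Metric.ball x ρ)ᶜ := by
        simp only [mem_compl_iff, mem_ball, not_not, dist_eq_norm]
        rw [norm_sub_rev y x]
        exact lt_of_not_ge h
      rw [Set.indicator_of_notMem hy]
      exact (Set.indicator_of_notMem (by simpa using h) (fun t : ℝ => t ^ (-β))).symm
  have h2 : ∫ y, g ‖x - y‖ = ∫ y : EuclideanSpace ℝ (Fin N), g ‖y‖ :=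
    integral_sub_left_eq_self (fun y => g ‖y‖) volume x
  have h3 := MeasureTheory.integral_fun_norm_addHaar
    (volume : Measure (EuclideanSpace ℝ (Fin N))) g
  rw [finrank_euclideanSpace_fin] at h3
  have h4 : ∫ t in Set.Ioi (0:ℝ), t ^ (N - 1) • g t
      = ∫ t in Set.Ioi ρ, t ^ ((N : ℝ) - 1 - β) := by
    have : ∀ t : ℝ, t ^ (N - 1) • g t
        = (Set.Ici ρ).indicator (fun u : ℝ => u ^ (N - 1) * u ^ (-β)) t := by
      intro t
      by_cases h : t ∈ Set.Ici ρ
      · rw [hg, Set.indicator_of_mem h, Set.indicator_of_mem h, smul_eq_mul]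
      · rw [hg, Set.indicator_of_notMem h, Set.indicator_of_notMem h, smul_zero]
    simp_rw [this]
    rw [MeasureTheory.setIntegral_indicator measurableSet_Ici]
    have hi : Set.Ioi (0:ℝ) ∩ Set.Ici ρ = Set.Ici ρ :=
      Set.inter_eq_self_of_subset_right (fun t ht => lt_of_lt_of_le hρ ht)
    rw [hi, MeasureTheory.integral_Ici_eq_integral_Ioi]
    apply MeasureTheory.setIntegral_congr_fun measurableSet_Ioi
    intro t ht
    have ht0 : (0:ℝ) < t := lt_trans hρ ht
    show t ^ (N - 1) * t ^ (-β) = t ^ ((N:ℝ) - 1 - β)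
    rw [← Real.rpow_natCast t (N - 1), ← Real.rpow_add ht0]
    congr 1
    have : ((N - 1 : ℕ) : ℝ) = (N : ℝ) - 1 := by
      have : 1 ≤ N := by omega
      push_cast [this]
      ring
    rw [this]
    ring
  have h5 : ∫ t in Set.Ioi ρ, t ^ ((N : ℝ) - 1 - β)
      = ρ ^ ((N:ℝ) - β) / (β - (N:ℝ)) := by
    rw [integral_Ioi_rpow_of_lt (by linarith) hρ]
    have hne : β - (N:ℝ) ≠ 0 := by linarith
    have : (N:ℝ) - 1 - β + 1 = (N:ℝ) - β := by ring
    rw [this, div_eq_div_iff (by linarith : (N:ℝ) - β < 0).ne hne]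
    ring
  rw [h1, h2, h3, h4, h5, nsmul_eq_mul, smul_eq_mul, measureReal_def]
  ring


lemma aux_rpow_diff {β m a b : ℝ} (hβ : 0 < β) (hm : 0 < m) (ha : m ≤ a) (hb : m ≤ b) :
    |a ^ (-β) - b ^ (-β)| ≤ β * m ^ (-β - 1) * |a - b| := by
  have hder : ∀ t ∈ Set.Ici m, HasDerivWithinAt (fun u : ℝ => u ^ (-β))
      ((-β) * t ^ (-β - 1)) (Set.Ici m) t := by
    intro t ht
    have ht0 : t ≠ 0 := (lt_of_lt_of_le hm ht).ne'
    exact (Real.hasDerivAt_rpow_const (Or.inl ht0)).hasDerivWithinAt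
  have hbound : ∀ t ∈ Set.Ici m, ‖(-β) * t ^ (-β - 1)‖ ≤ β * m ^ (-β - 1) := by
    intro t ht
    have ht0 : (0:ℝ) < t := lt_of_lt_of_le hm ht
    rw [norm_mul, Real.norm_eq_abs, Real.norm_eq_abs, abs_neg, abs_of_pos hβ,
      abs_of_nonneg (Real.rpow_nonneg ht0.le _)]
    exact mul_le_mul_of_nonneg_left
      (Real.rpow_le_rpow_of_nonpos hm ht (by linarith)) hβ.le
  have := (convex_Ici m).norm_image_sub_le_of_norm_hasDerivWithin_le hder hbound
    (Set.mem_Ici.mpr hb) (Set.mem_Ici.mpr ha)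
  simpa [Real.norm_eq_abs] using this

lemma aux_infDist_frontier {N : ℕ} {Ω : Set (EuclideanSpace ℝ (Fin N))} (hΩ : IsOpen Ω)
    (hne : Ωᶜ.Nonempty) {x : EuclideanSpace ℝ (Fin N)} (hx : x ∈ Ω) :
    Metric.infDist x (frontier Ω) = Metric.infDist x Ωᶜ := by
  obtain ⟨y, hyf, hyd⟩ :=
    exists_mem_frontier_infDist_compl_eq_dist hx (Set.nonempty_compl.mp hne)
  have hfs : frontier Ω ⊆ Ωᶜ := by
    intro z hz
    rw [← hΩ.interior_eq]
    exact hz.2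
  refine le_antisymm ?_ (Metric.infDist_le_infDist_of_subset hfs ⟨y, hyf⟩)
  rw [hyd]
  exact Metric.infDist_le_dist_of_mem hyf

lemma aux_infDist_pos {N : ℕ} {Ω : Set (EuclideanSpace ℝ (Fin N))} (hΩ : IsOpen Ω)
    (hne : Ωᶜ.Nonempty) {x : EuclideanSpace ℝ (Fin N)} (hx : x ∈ Ω) :
    0 < Metric.infDist x Ωᶜ :=
  (hΩ.isClosed_compl.notMem_iff_infDist_pos hne).mp (by simpa using hx)

lemma aux_subset_compl_ball {N : ℕ} {Ω : Set (EuclideanSpace ℝ (Fin N))}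
    {x : EuclideanSpace ℝ (Fin N)} :
    Ωᶜ ⊆ (Metric.ball x (Metric.infDist x Ωᶜ))ᶜ := by
  intro y hy hball
  have h1 : Metric.infDist x Ωᶜ ≤ dist x y := Metric.infDist_le_dist_of_mem hy
  rw [Metric.mem_ball, dist_comm] at hball
  linarith



noncomputable def auxC (N : ℕ) (s : ℝ) : ℝ :=
  ((N : ℝ) * (volume (Metric.ball (0 : EuclideanSpace ℝ (Fin N)) 1)).toReal) / s
  + ((N : ℝ) + 2 * s) * 2 ^ ((N : ℝ) + 2 * s + 1) *
      ((N : ℝ) * (volume (Metric.ball (0 : EuclideanSpace ℝ (Fin N)) 1)).toReal) / (1 + 2 * s)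
  + 1

lemma auxC_pos {N : ℕ} {s : ℝ} (hs : 0 < s) (hs1 : s < 1) : 0 < auxC N s := by
  have hV : 0 ≤ (volume (Metric.ball (0 : EuclideanSpace ℝ (Fin N)) 1)).toReal :=
    ENNReal.toReal_nonneg
  have h1 : 0 ≤ ((N : ℝ) * (volume (Metric.ball (0 : EuclideanSpace ℝ (Fin N)) 1)).toReal) / s := by
    positivity
  have h2 : 0 ≤ ((N : ℝ) + 2 * s) * 2 ^ ((N : ℝ) + 2 * s + 1) *
      ((N : ℝ) * (volume (Metric.ball (0 : EuclideanSpace ℝ (Fin N)) 1)).toReal) / (1 + 2 * s) := by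
    have hb : (0:ℝ) < (N : ℝ) + 2 * s := by positivity
    positivity
  unfold auxC; linarith

lemma aux_int_le {N : ℕ} (hN : 2 ≤ N) {β : ℝ} (hβ : (N : ℝ) < β)
    {Ω : Set (EuclideanSpace ℝ (Fin N))} (hΩ : IsOpen Ω) (hne : Ωᶜ.Nonempty)
    {x : EuclideanSpace ℝ (Fin N)} (hx : x ∈ Ω) :
    ∫ y in Ωᶜ, ‖x - y‖ ^ (-β) ≤
      (N : ℝ) * (volume (Metric.ball (0 : EuclideanSpace ℝ (Fin N)) 1)).toReal *
        ((Metric.infDist x Ωᶜ) ^ ((N : ℝ) - β) / (β - (N : ℝ))) := by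
  have hρ := aux_infDist_pos hΩ hne hx
  calc ∫ y in Ωᶜ, ‖x - y‖ ^ (-β)
      ≤ ∫ y in (Metric.ball x (Metric.infDist x Ωᶜ))ᶜ, ‖x - y‖ ^ (-β) :=
        setIntegral_mono_set (aux_integrableOn hN hβ x hρ)
          (ae_of_all _ fun y => Real.rpow_nonneg (norm_nonneg _) _)
          (HasSubset.Subset.eventuallyLE aux_subset_compl_ball)
    _ = _ := aux_integral hN hβ x hρ

lemma aux_main {N : ℕ} (hN : 2 ≤ N) {s : ℝ} (hs0 : 0 < s) (hs1 : s < 1)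
    {Ω : Set (EuclideanSpace ℝ (Fin N))} (hΩ : IsOpen Ω) (hne : Ωᶜ.Nonempty)
    {x₁ x₂ : EuclideanSpace ℝ (Fin N)} (hx₁ : x₁ ∈ Ω) (hx₂ : x₂ ∈ Ω)
    (hord : Metric.infDist x₂ Ωᶜ ≤ Metric.infDist x₁ Ωᶜ) :
    |phiReg N s Ω x₁ - phiReg N s Ω x₂| ≤
      auxC N s * (Metric.infDist x₁ Ωᶜ ^ (-1 - 2 * s) + Metric.infDist x₂ Ωᶜ ^ (-1 - 2 * s))
        * ‖x₁ - x₂‖ := by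
  set V : ℝ := (volume (Metric.ball (0 : EuclideanSpace ℝ (Fin N)) 1)).toReal with hVdef
  have hV : 0 ≤ V := ENNReal.toReal_nonneg
  set β : ℝ := (N : ℝ) + 2 * s with hβdef
  have hβN : (N : ℝ) < β := by rw [hβdef]; linarith
  have hβ0 : (0 : ℝ) < β := lt_of_le_of_lt (Nat.cast_nonneg N) hβN
  set ρ₁ : ℝ := Metric.infDist x₁ Ωᶜ with hρ₁def
  set ρ₂ : ℝ := Metric.infDist x₂ Ωᶜ with hρ₂def
  have hρ₁ : 0 < ρ₁ := aux_infDist_pos hΩ hne hx₁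
  have hρ₂ : 0 < ρ₂ := aux_infDist_pos hΩ hne hx₂
  set d : ℝ := ‖x₁ - x₂‖ with hddef
  have hd0 : 0 ≤ d := norm_nonneg _
  set S : ℝ := ρ₁ ^ (-1 - 2 * s) + ρ₂ ^ (-1 - 2 * s) with hSdef
  have hS1 : 0 ≤ ρ₁ ^ (-1 - 2 * s) := Real.rpow_nonneg hρ₁.le _
  have hS2 : 0 ≤ ρ₂ ^ (-1 - 2 * s) := Real.rpow_nonneg hρ₂.le _
  have hS : 0 ≤ S := by rw [hSdef]; linarith
  have hφ : ∀ x : EuclideanSpace ℝ (Fin N),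
      phiReg N s Ω x = ∫ y in Ωᶜ, ‖x - y‖ ^ (-β) := fun x => rfl
  have hint : ∀ x : EuclideanSpace ℝ (Fin N), x ∈ Ω →
      IntegrableOn (fun y => ‖x - y‖ ^ (-β)) Ωᶜ volume := fun x hx =>
    (aux_integrableOn hN hβN x (aux_infDist_pos hΩ hne hx)).mono_set aux_subset_compl_ball
  -- the two upper bound constants
  have hc1 : (N : ℝ) * V / s ≤ auxC N s := by
    have h2 : 0 ≤ ((N : ℝ) + 2 * s) * 2 ^ ((N : ℝ) + 2 * s + 1) * ((N : ℝ) * V) / (1 + 2 * s) := by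
      have hb : (0:ℝ) < (N : ℝ) + 2 * s := by positivity
      positivity
    unfold auxC
    rw [← hVdef]
    linarith
  have hc2 : β * 2 ^ (β + 1) * ((N : ℝ) * V) / (1 + 2 * s) ≤ auxC N s := by
    have h1 : 0 ≤ ((N : ℝ) * V) / s := by positivity
    unfold auxC
    rw [← hVdef, ← hβdef]
    linarith
  rcases le_or_gt ρ₁ (2 * d) with hcase | hcase
  · -- Case A : points far apart compared to distance to boundary
    have hnn : ∀ x : EuclideanSpace ℝ (Fin N), 0 ≤ phiReg N s Ω x := by
      intro x
      rw [hφ]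
      exact setIntegral_nonneg hΩ.isClosed_compl.measurableSet
        (fun y _ => Real.rpow_nonneg (norm_nonneg _) _)
    have hb : ∀ x : EuclideanSpace ℝ (Fin N), x ∈ Ω →
        phiReg N s Ω x ≤ (N : ℝ) * V * ((Metric.infDist x Ωᶜ) ^ (-(2*s)) / (2*s)) := by
      intro x hx
      rw [hφ]
      have := aux_int_le hN hβN hΩ hne hx
      rw [← hVdef] at this
      have he1 : (N : ℝ) - β = -(2*s) := by rw [hβdef]; ring
      have he2 : β - (N : ℝ) = 2*s := by rw [hβdef]; ring
      rwa [he1, he2] at this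
    have hsplit : ∀ ρ : ℝ, 0 < ρ → ρ ≤ 2 * d → ρ ^ (-(2*s)) ≤ ρ ^ (-1 - 2*s) * (2*d) := by
      intro ρ hρ hle
      have : ρ ^ (-(2*s)) = ρ ^ (-1 - 2*s) * ρ := by
        rw [← Real.rpow_add_one hρ.ne' (-1 - 2*s)]
        congr 1
        ring
      rw [this]
      exact mul_le_mul_of_nonneg_left hle (Real.rpow_nonneg hρ.le _)
    have h1 := hb x₁ hx₁
    have h2 := hb x₂ hx₂
    rw [← hρ₁def] at h1
    rw [← hρ₂def] at h2
    have hs₁ := hsplit ρ₁ hρ₁ hcase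
    have hs₂ := hsplit ρ₂ hρ₂ (le_trans hord hcase)
    have habs : |phiReg N s Ω x₁ - phiReg N s Ω x₂| ≤
        phiReg N s Ω x₁ + phiReg N s Ω x₂ := by
      have := hnn x₁
      have := hnn x₂
      rw [abs_sub_le_iff]
      constructor <;> linarith
    have hmono1 : (N:ℝ) * V * (ρ₁ ^ (-(2*s)) / (2*s)) ≤
        (N:ℝ) * V * ((ρ₁ ^ (-1-2*s) * (2*d)) / (2*s)) := by
      apply mul_le_mul_of_nonneg_left _ (by positivity)
      apply div_le_div_of_nonneg_right _ (by positivity)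
      · exact hs₁
    have hmono2 : (N:ℝ) * V * (ρ₂ ^ (-(2*s)) / (2*s)) ≤
        (N:ℝ) * V * ((ρ₂ ^ (-1-2*s) * (2*d)) / (2*s)) := by
      apply mul_le_mul_of_nonneg_left _ (by positivity)
      apply div_le_div_of_nonneg_right _ (by positivity)
      · exact hs₂
    have heq : (N:ℝ) * V * ((ρ₁ ^ (-1-2*s) * (2*d)) / (2*s))
        + (N:ℝ) * V * ((ρ₂ ^ (-1-2*s) * (2*d)) / (2*s))
        = ((N:ℝ) * V / s) * S * d := by
      rw [hSdef]
      field_simp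
    have hfin : ((N:ℝ) * V / s) * S * d ≤ auxC N s * S * d := by
      have : 0 ≤ S * d := mul_nonneg hS hd0
      calc ((N:ℝ) * V / s) * S * d = ((N:ℝ) * V / s) * (S * d) := by ring
        _ ≤ auxC N s * (S * d) := mul_le_mul_of_nonneg_right hc1 this
        _ = auxC N s * S * d := by ring
    calc |phiReg N s Ω x₁ - phiReg N s Ω x₂|
        ≤ phiReg N s Ω x₁ + phiReg N s Ω x₂ := habs
      _ ≤ (N:ℝ) * V * (ρ₁ ^ (-(2*s)) / (2*s)) + (N:ℝ) * V * (ρ₂ ^ (-(2*s)) / (2*s)) :=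
          add_le_add h1 h2
      _ ≤ (N:ℝ) * V * ((ρ₁ ^ (-1-2*s) * (2*d)) / (2*s))
          + (N:ℝ) * V * ((ρ₂ ^ (-1-2*s) * (2*d)) / (2*s)) := add_le_add hmono1 hmono2
      _ = ((N:ℝ) * V / s) * S * d := heq
      _ ≤ auxC N s * S * d := hfin
  · -- Case B : mean value estimate
    have hsub1 : Ωᶜ ⊆ (Metric.ball x₁ ρ₁)ᶜ := aux_subset_compl_ball
    have hβ1N : (N : ℝ) < β + 1 := by linarith
    have hint1 : IntegrableOn (fun y => ‖x₁ - y‖ ^ (-(β+1))) Ωᶜ volume :=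
      (aux_integrableOn hN hβ1N x₁ hρ₁).mono_set hsub1
    set g : EuclideanSpace ℝ (Fin N) → ℝ :=
      fun y => (β * 2 ^ (β + 1) * d) * ‖x₁ - y‖ ^ (-(β+1)) with hgdef
    have hgint : IntegrableOn g Ωᶜ volume := hint1.const_mul _
    have hpt : ∀ y ∈ Ωᶜ, |‖x₁ - y‖ ^ (-β) - ‖x₂ - y‖ ^ (-β)| ≤ g y := by
      intro y hy
      set a : ℝ := ‖x₁ - y‖ with hadef
      set b : ℝ := ‖x₂ - y‖ with hbdef
      have ha : ρ₁ ≤ a := by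
        have h := hsub1 hy
        have : ¬ dist y x₁ < ρ₁ := h
        rw [dist_comm, dist_eq_norm] at this
        exact not_lt.mp this
      have ha0 : 0 < a := lt_of_lt_of_le hρ₁ ha
      have habd : |a - b| ≤ d := by
        have := abs_norm_sub_norm_le (x₁ - y) (x₂ - y)
        rwa [sub_sub_sub_cancel_right] at this
      have hb : a / 2 ≤ b := by
        have h1 : a - b ≤ |a - b| := le_abs_self _
        linarith
      have hm : 0 < a / 2 := by linarith
      have key := aux_rpow_diff hβ0 hm (by linarith : a / 2 ≤ a) hb
      have key2 : |a ^ (-β) - b ^ (-β)| ≤ β * (a/2) ^ (-β - 1) * d :=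
        le_trans key (mul_le_mul_of_nonneg_left habd
          (mul_nonneg hβ0.le (Real.rpow_nonneg hm.le _)))
      have hpow : (a/2) ^ (-β - 1) = 2 ^ (β + 1) * a ^ (-(β+1)) := by
        rw [Real.div_rpow ha0.le (by norm_num : (0:ℝ) ≤ 2)]
        rw [show -β - 1 = -(β+1) by ring]
        rw [Real.rpow_neg (by norm_num : (0:ℝ) ≤ 2)]
        rw [div_eq_mul_inv, inv_inv]
        ring
      rw [hpow] at key2
      calc |a ^ (-β) - b ^ (-β)| ≤ β * (2 ^ (β + 1) * a ^ (-(β+1))) * d := key2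
        _ = g y := by rw [hgdef]; ring
    have hi1 := hint x₁ hx₁
    have hi2 := hint x₂ hx₂
    have hstep1 : |phiReg N s Ω x₁ - phiReg N s Ω x₂| ≤
        ∫ y in Ωᶜ, |‖x₁ - y‖ ^ (-β) - ‖x₂ - y‖ ^ (-β)| := by
      rw [hφ, hφ, ← integral_sub hi1 hi2]
      simpa using norm_integral_le_integral_norm
        (fun y => ‖x₁ - y‖ ^ (-β) - ‖x₂ - y‖ ^ (-β)) (μ := volume.restrict Ωᶜ)
    have hstep2 : ∫ y in Ωᶜ, |‖x₁ - y‖ ^ (-β) - ‖x₂ - y‖ ^ (-β)| ≤ ∫ y in Ωᶜ, g y :=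
      setIntegral_mono_on ((hi1.sub hi2).abs) hgint
        hΩ.isClosed_compl.measurableSet hpt
    have hstep3 : ∫ y in Ωᶜ, g y ≤
        (β * 2 ^ (β + 1) * d) * ((N:ℝ) * V * (ρ₁ ^ (-1 - 2*s) / (1 + 2*s))) := by
      rw [hgdef]
      simp only []
      rw [MeasureTheory.integral_const_mul]
      apply mul_le_mul_of_nonneg_left _ (by positivity)
      have := aux_int_le hN hβ1N hΩ hne hx₁
      rw [← hVdef, ← hρ₁def] at this
      have he1 : (N : ℝ) - (β + 1) = -1 - 2*s := by rw [hβdef]; ring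
      have he2 : (β + 1) - (N : ℝ) = 1 + 2*s := by rw [hβdef]; ring
      rwa [he1, he2] at this
    have hfin : (β * 2 ^ (β + 1) * d) * ((N:ℝ) * V * (ρ₁ ^ (-1 - 2*s) / (1 + 2*s)))
        ≤ auxC N s * S * d := by
      have hρS : ρ₁ ^ (-1 - 2*s) ≤ S := by rw [hSdef]; linarith
      have e1 : (β * 2 ^ (β + 1) * d) * ((N:ℝ) * V * (ρ₁ ^ (-1 - 2*s) / (1 + 2*s)))
          = (β * 2 ^ (β + 1) * ((N:ℝ) * V) / (1 + 2*s)) * ρ₁ ^ (-1 - 2*s) * d := by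
        field_simp
      rw [e1]
      have h2 : (β * 2 ^ (β + 1) * ((N:ℝ) * V) / (1 + 2*s)) * ρ₁ ^ (-1 - 2*s) * d
          ≤ (β * 2 ^ (β + 1) * ((N:ℝ) * V) / (1 + 2*s)) * S * d := by
        apply mul_le_mul_of_nonneg_right _ hd0
        exact mul_le_mul_of_nonneg_left hρS (by positivity)
      have h3 : (β * 2 ^ (β + 1) * ((N:ℝ) * V) / (1 + 2*s)) * S * d
          ≤ auxC N s * S * d := by
        apply mul_le_mul_of_nonneg_right _ hd0
        exact mul_le_mul_of_nonneg_right hc2 hS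
      linarith
    calc |phiReg N s Ω x₁ - phiReg N s Ω x₂|
        ≤ ∫ y in Ωᶜ, |‖x₁ - y‖ ^ (-β) - ‖x₂ - y‖ ^ (-β)| := hstep1
      _ ≤ ∫ y in Ωᶜ, g y := hstep2
      _ ≤ (β * 2 ^ (β + 1) * d) * ((N:ℝ) * V * (ρ₁ ^ (-1 - 2*s) / (1 + 2*s))) := hstep3
      _ ≤ auxC N s * S * d := hfin




lemma aux_main' {N : ℕ} (hN : 2 ≤ N) {s : ℝ} (hs0 : 0 < s) (hs1 : s < 1)
    {Ω : Set (EuclideanSpace ℝ (Fin N))} (hΩ : IsOpen Ω) (hne : Ωᶜ.Nonempty)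
    {x₁ x₂ : EuclideanSpace ℝ (Fin N)} (hx₁ : x₁ ∈ Ω) (hx₂ : x₂ ∈ Ω) :
    |phiReg N s Ω x₁ - phiReg N s Ω x₂| ≤
      auxC N s * (Metric.infDist x₁ Ωᶜ ^ (-1 - 2 * s) + Metric.infDist x₂ Ωᶜ ^ (-1 - 2 * s))
        * ‖x₁ - x₂‖ := by
  rcases le_total (Metric.infDist x₂ Ωᶜ) (Metric.infDist x₁ Ωᶜ) with h | h
  · exact aux_main hN hs0 hs1 hΩ hne hx₁ hx₂ h
  · have h2 := aux_main hN hs0 hs1 hΩ hne hx₂ hx₁ h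
    rw [abs_sub_comm, norm_sub_rev x₂ x₁, add_comm] at h2
    exact h2

/-- a Lipschitz-type estimate for `φ_Ω` with constant depending only on `N, s`,
where `ρ(x) = dist(x, ∂Ω)`; in particular `φ_Ω` is locally Lipschitz continuous on `Ω`. -/
theorem stmt1 (N : ℕ) (hN : 2 ≤ N) (s : ℝ) (hs : s ∈ Set.Ioo (0 : ℝ) 1) :
    ∃ c > (0 : ℝ), ∀ Ω : Set (EuclideanSpace ℝ (Fin N)), IsOpen Ω → Ωᶜ.Nonempty →
      (∀ x₁ ∈ Ω, ∀ x₂ ∈ Ω,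
        |phiReg N s Ω x₁ - phiReg N s Ω x₂| ≤
          c * (Metric.infDist x₁ (frontier Ω) ^ (-1 - 2 * s)
               + Metric.infDist x₂ (frontier Ω) ^ (-1 - 2 * s)) * ‖x₁ - x₂‖) ∧
      (∀ x ∈ Ω, ∃ K : NNReal, ∃ t ∈ nhdsWithin x Ω, LipschitzOnWith K (phiReg N s Ω) t) := by
  obtain ⟨hs0, hs1⟩ := hs
  refine ⟨auxC N s, auxC_pos hs0 hs1, fun Ω hΩ hne => ⟨?_, ?_⟩⟩
  · intro x₁ hx₁ x₂ hx₂
    rw [aux_infDist_frontier hΩ hne hx₁, aux_infDist_frontier hΩ hne hx₂]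
    exact aux_main' hN hs0 hs1 hΩ hne hx₁ hx₂
  · intro x hx
    have hρ : 0 < Metric.infDist x Ωᶜ := aux_infDist_pos hΩ hne hx
    set ρ : ℝ := Metric.infDist x Ωᶜ with hρdef
    set L : ℝ := auxC N s * (2 * (ρ/2) ^ (-1 - 2*s)) with hLdef
    refine ⟨L.toNNReal, Metric.ball x (ρ/2) ∩ Ω, ?_, ?_⟩
    · exact Filter.inter_mem
        (mem_nhdsWithin_of_mem_nhds (Metric.ball_mem_nhds x (by positivity)))
        self_mem_nhdsWithin
    · apply LipschitzOnWith.of_dist_le_mul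
      intro z₁ hz₁ z₂ hz₂
      have key : ∀ z, z ∈ Metric.ball x (ρ/2) ∩ Ω → ρ/2 ≤ Metric.infDist z Ωᶜ := by
        intro z hz
        have h1 : Metric.infDist x Ωᶜ ≤ Metric.infDist z Ωᶜ + dist x z :=
          Metric.infDist_le_infDist_add_dist
        have h2 : dist x z < ρ/2 := by
          have := hz.1
          rw [Metric.mem_ball] at this
          rw [dist_comm]
          exact this
        rw [← hρdef] at h1
        linarith
      have hzb : ∀ z, z ∈ Metric.ball x (ρ/2) ∩ Ω →
          Metric.infDist z Ωᶜ ^ (-1 - 2*s) ≤ (ρ/2) ^ (-1 - 2*s) := fun z hz =>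
        Real.rpow_le_rpow_of_nonpos (by positivity) (key z hz) (by linarith)
      have est := aux_main' hN hs0 hs1 hΩ hne hz₁.2 hz₂.2
      have hC := auxC_pos (N := N) hs0 hs1
      have step : auxC N s * (Metric.infDist z₁ Ωᶜ ^ (-1 - 2*s)
            + Metric.infDist z₂ Ωᶜ ^ (-1 - 2*s)) * ‖z₁ - z₂‖ ≤ L * ‖z₁ - z₂‖ := by
        rw [hLdef]
        apply mul_le_mul_of_nonneg_right _ (norm_nonneg _)
        apply mul_le_mul_of_nonneg_left _ hC.le
        have := hzb z₁ hz₁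
        have := hzb z₂ hz₂
        linarith
      rw [Real.dist_eq, dist_eq_norm]
      calc |phiReg N s Ω z₁ - phiReg N s Ω z₂|
          ≤ auxC N s * (Metric.infDist z₁ Ωᶜ ^ (-1 - 2*s)
              + Metric.infDist z₂ Ωᶜ ^ (-1 - 2*s)) * ‖z₁ - z₂‖ := est
        _ ≤ L * ‖z₁ - z₂‖ := step
        _ ≤ (L.toNNReal : ℝ) * ‖z₁ - z₂‖ := by
            apply mul_le_mul_of_nonneg_right _ (norm_nonneg _)
            rw [Real.coe_toNNReal']
            exact le_max_left _ _
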